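/- For each group g ∈ {X, Y}, let f₁^g, f₀^g be full-support probability densities on ℝ satisfying strict MLRP, and let H^g be a monotone nondecreasing continuous cost CDF. Then the following are equivalent: (a) there exist measurable classifiers δ^X, δ^Y : ℝ → [0,1] with equal true positive rates 𝒯 and equal false positive rates ℱ across groups satisfying 𝒯 > ℱ (error-rate balance by an informative classifier), and a common stake r ∈ ℝ (equal stakes), such that H^X(r·(𝒯 − ℱ)) = H^Y(r·(𝒯 − ℱ)) (equal prevalence, hence predictive parity) and H^g(r·(𝒯 − ℱ)) ≥ H^g(0) for both g (aligned incentives); (b) there exists c̄ ≥ 0 with H^X(c̄) = H^Y(c̄). -/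

import Mathlib

open MeasureTheory

/-- A full-support probability density on ℝ. -/
def IsFullSupportDensity (f : ℝ → ℝ) : Prop :=
  Measurable f ∧ (∀ s, 0 < f s) ∧ (∫ s, f s) = 1

/-- Strict monotone likelihood ratio property of `f₁` relative to `f₀`. -/
def StrictMLRP (f₁ f₀ : ℝ → ℝ) : Prop :=
  ∀ s t : ℝ, s < t → f₁ s * f₀ t < f₁ t * f₀ s

/-- A (randomized) classifier: a measurable map from signals to probabilities. -/
def IsClassifier (δ : ℝ → ℝ) : Prop :=
  Measurable δ ∧ ∀ s, δ s ∈ Set.Icc (0 : ℝ) 1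

/-- True positive rate of classifier `δ` against compliant density `f₁`. -/
noncomputable def TPR (δ f₁ : ℝ → ℝ) : ℝ := ∫ s, δ s * f₁ s

/-- False positive rate of classifier `δ` against non-compliant density `f₀`. -/
noncomputable def FPR (δ f₀ : ℝ → ℝ) : ℝ := ∫ s, δ s * f₀ s

noncomputable def myCDF (f : ℝ → ℝ) (s : ℝ) : ℝ := ∫ t in Set.Iic s, f t

lemma IsFullSupportDensity.integrable {f : ℝ → ℝ} (h : IsFullSupportDensity f) :
    Integrable f := by
  by_contra hc
  have := integral_undef hc
  rw [h.2.2] at this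
  norm_num at this

lemma myCDF_nonneg {f : ℝ → ℝ} (h : IsFullSupportDensity f) (s : ℝ) : 0 ≤ myCDF f s :=
  setIntegral_nonneg measurableSet_Iic (fun t _ => (h.2.1 t).le)

lemma myCDF_le_one {f : ℝ → ℝ} (h : IsFullSupportDensity f) (s : ℝ) : myCDF f s ≤ 1 := by
  have := setIntegral_le_integral (s := Set.Iic s) h.integrable
    (Filter.Eventually.of_forall fun t => (h.2.1 t).le)
  rw [h.2.2] at this
  exact this

lemma myCDF_strictMono {f : ℝ → ℝ} (h : IsFullSupportDensity f) : StrictMono (myCDF f) := by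
  intro s t hst
  have hunion : Set.Iic s ∪ Set.Ioc s t = Set.Iic t := Set.Iic_union_Ioc_eq_Iic hst.le
  have hint : myCDF f t = myCDF f s + ∫ x in Set.Ioc s t, f x := by
    rw [myCDF, ← hunion, setIntegral_union (Set.Iic_disjoint_Ioc le_rfl) measurableSet_Ioc
      h.integrable.integrableOn h.integrable.integrableOn]
    rfl
  have hpos : 0 < ∫ x in Set.Ioc s t, f x := by
    rw [setIntegral_pos_iff_support_of_nonneg_ae
      (Filter.Eventually.of_forall fun x => (h.2.1 x).le) h.integrable.integrableOn]
    have hsupp : Function.support f = Set.univ := by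
      ext x; simp [Function.support, (h.2.1 x).ne']
    rw [hsupp, Set.univ_inter, Real.volume_Ioc]
    simp [hst]
  linarith [hint]

lemma myCDF_mono {f : ℝ → ℝ} (h : IsFullSupportDensity f) : Monotone (myCDF f) :=
  (myCDF_strictMono h).monotone

lemma myCDF_measurable {f : ℝ → ℝ} (h : IsFullSupportDensity f) : Measurable (myCDF f) :=
  (myCDF_mono h).measurable

lemma integrable_myCDF_mul {f g : ℝ → ℝ} (hf : IsFullSupportDensity f)
    (hg : Integrable g) : Integrable (fun s => myCDF f s * g s) :=
  hg.bdd_mul (myCDF_measurable hf).aestronglyMeasurable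
    (c := 1) (Filter.Eventually.of_forall fun s => by
      rw [Real.norm_eq_abs, abs_le]
      exact ⟨by linarith [myCDF_nonneg hf s], myCDF_le_one hf s⟩)

/-- Key lemma: under strict MLRP, the CDF of the non-compliant density has strictly
greater mean under the compliant density. -/
lemma mlrp_key {f₁ f₀ : ℝ → ℝ} (h₁ : IsFullSupportDensity f₁) (h₀ : IsFullSupportDensity f₀)
    (hm : StrictMLRP f₁ f₀) :
    (∫ s, myCDF f₀ s * f₀ s) < ∫ s, myCDF f₀ s * f₁ s := by
  classical
  -- first: there is a point where f₀ < f₁ and a point where f₁ ≤ f₀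
  have hint_sub : (∫ s, (f₁ s - f₀ s)) = 0 := by
    rw [integral_sub h₁.integrable h₀.integrable, h₁.2.2, h₀.2.2]; ring
  have hexists_lt : ∃ b, f₀ b < f₁ b := by
    by_contra hc
    push_neg at hc
    -- f₁ ≤ f₀ everywhere, equal integrals ⇒ f₁ = f₀ a.e. ⇒ contradicts strict MLRP
    have hnn : 0 ≤ᵐ[volume] fun s => f₀ s - f₁ s :=
      Filter.Eventually.of_forall fun s => by simp only [Pi.zero_apply]; linarith [hc s]
    have hzero : (∫ s, (f₀ s - f₁ s)) = 0 := by
      rw [integral_sub h₀.integrable h₁.integrable, h₁.2.2, h₀.2.2]; ring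
    have hae : (fun s => f₀ s - f₁ s) =ᵐ[volume] 0 :=
      (integral_eq_zero_iff_of_nonneg_ae hnn (h₀.integrable.sub h₁.integrable)).mp hzero
    -- the a.e.-equal set meets Ioo 0 1 and Ioo 2 3
    have hmeas : volume {s | ¬ (f₀ s - f₁ s = 0)} = 0 := by
      have := hae
      rw [Filter.EventuallyEq, ae_iff] at this
      simpa using this
    have h1 : ∃ s ∈ Set.Ioo (0:ℝ) 1, f₀ s - f₁ s = 0 := by
      by_contra hno
      push_neg at hno
      have hsub : Set.Ioo (0:ℝ) 1 ⊆ {s | ¬ (f₀ s - f₁ s = 0)} := fun s hs => hno s hs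
      have := measure_mono (μ := volume) hsub
      rw [hmeas] at this
      simp [Real.volume_Ioo] at this <;> linarith
    have h2 : ∃ s ∈ Set.Ioo (2:ℝ) 3, f₀ s - f₁ s = 0 := by
      by_contra hno
      push_neg at hno
      have hsub : Set.Ioo (2:ℝ) 3 ⊆ {s | ¬ (f₀ s - f₁ s = 0)} := fun s hs => hno s hs
      have := measure_mono (μ := volume) hsub
      rw [hmeas] at this
      simp [Real.volume_Ioo] at this <;> linarith
    obtain ⟨s, hs, hseq⟩ := h1
    obtain ⟨t, ht, hteq⟩ := h2
    have hst : s < t := by linarith [hs.2, ht.1]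
    have := hm s t hst
    have h₀s := h₀.2.1 s
    have h₀t := h₀.2.1 t
    nlinarith [this]
  have hexists_le : ∃ a, f₁ a ≤ f₀ a := by
    by_contra hc
    push_neg at hc
    have hnn : 0 ≤ᵐ[volume] fun s => f₁ s - f₀ s :=
      Filter.Eventually.of_forall fun s => by simp only [Pi.zero_apply]; linarith [hc s]
    have hae : (fun s => f₁ s - f₀ s) =ᵐ[volume] 0 :=
      (integral_eq_zero_iff_of_nonneg_ae hnn (h₁.integrable.sub h₀.integrable)).mp hint_sub
    have hmeas : volume {s | ¬ (f₁ s - f₀ s = 0)} = 0 := by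
      have := hae
      rw [Filter.EventuallyEq, ae_iff] at this
      simpa using this
    have h1 : ∃ s ∈ Set.Ioo (0:ℝ) 1, f₁ s - f₀ s = 0 := by
      by_contra hno
      push_neg at hno
      have hsub : Set.Ioo (0:ℝ) 1 ⊆ {s | ¬ (f₁ s - f₀ s = 0)} := fun s hs => hno s hs
      have := measure_mono (μ := volume) hsub
      rw [hmeas] at this
      simp [Real.volume_Ioo] at this <;> linarith
    obtain ⟨s, hs, hseq⟩ := h1
    have := hc s
    linarith [hseq]
  obtain ⟨b, hb⟩ := hexists_lt
  obtain ⟨a, ha⟩ := hexists_le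
  set S : Set ℝ := {s | f₁ s ≤ f₀ s} with hS
  have hSne : S.Nonempty := ⟨a, ha⟩
  have hSbdd : BddAbove S := by
    refine ⟨b, fun s hs => ?_⟩
    by_contra hsb
    push_neg at hsb
    have hmlrp := hm b s hsb
    have h₀s := h₀.2.1 s
    have h₀b := h₀.2.1 b
    have hs' : f₁ s ≤ f₀ s := hs
    have e1 : f₁ s * f₀ b ≤ f₀ s * f₀ b := mul_le_mul_of_nonneg_right hs' h₀b.le
    have e2 : f₀ s * f₀ b < f₀ s * f₁ b := mul_lt_mul_of_pos_left hb h₀s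
    nlinarith [e1, e2, hmlrp]
  set c : ℝ := sSup S with hc
  -- s > c ⇒ f₀ s < f₁ s ;  s < c ⇒ f₁ s < f₀ s
  have hgt : ∀ s, c < s → f₀ s < f₁ s := by
    intro s hcs
    by_contra hle
    push_neg at hle
    exact absurd (le_csSup hSbdd hle) (not_le.mpr hcs)
  have hlt : ∀ s, s < c → f₁ s < f₀ s := by
    intro s hsc
    obtain ⟨t, ht, hst⟩ := exists_lt_of_lt_csSup hSne hsc
    have hmlrp := hm s t hst
    have h₀t := h₀.2.1 t
    have h₀s := h₀.2.1 s
    have ht' : f₁ t ≤ f₀ t := ht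
    have e1 : f₁ t * f₀ s ≤ f₀ t * f₀ s := mul_le_mul_of_nonneg_right ht' h₀s.le
    nlinarith [e1, hmlrp]
  set k : ℝ := myCDF f₀ c with hk
  set G : ℝ → ℝ := fun s => (myCDF f₀ s - k) * (f₁ s - f₀ s) with hG
  have hGnn : ∀ s, 0 ≤ G s := by
    intro s
    rcases lt_trichotomy s c with h | h | h
    · have h1 := hlt s h
      have h2 := (myCDF_strictMono h₀) h
      simp only [hG]
      nlinarith
    · simp [hG, hk, h]
    · have h1 := hgt s h
      have h2 := (myCDF_strictMono h₀) h
      simp only [hG]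
      nlinarith
  have hGpos : ∀ s, s ≠ c → 0 < G s := by
    intro s hs
    rcases lt_trichotomy s c with h | h | h
    · have h1 := hlt s h
      have h2 := (myCDF_strictMono h₀) h
      simp only [hG]
      nlinarith
    · exact absurd h hs
    · have h1 := hgt s h
      have h2 := (myCDF_strictMono h₀) h
      simp only [hG]
      nlinarith
  have hint1 : Integrable (fun s => myCDF f₀ s * f₁ s) := integrable_myCDF_mul h₀ h₁.integrable
  have hint0 : Integrable (fun s => myCDF f₀ s * f₀ s) := integrable_myCDF_mul h₀ h₀.integrable
  have hGint : Integrable G := by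
    have : G = fun s => (myCDF f₀ s * f₁ s - myCDF f₀ s * f₀ s) - (k * f₁ s - k * f₀ s) := by
      funext s; simp only [hG]; ring
    rw [this]
    exact ((hint1.sub hint0).sub ((h₁.integrable.const_mul k).sub (h₀.integrable.const_mul k)))
  have hA : Integrable (fun s => myCDF f₀ s * f₁ s - myCDF f₀ s * f₀ s) := hint1.sub hint0
  have hB : Integrable (fun s => k * f₁ s - k * f₀ s) :=
    (h₁.integrable.const_mul k).sub (h₀.integrable.const_mul k)
  have hGval : (∫ s, G s) = (∫ s, myCDF f₀ s * f₁ s) - ∫ s, myCDF f₀ s * f₀ s := by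
    have hGeq : G = fun s => (myCDF f₀ s * f₁ s - myCDF f₀ s * f₀ s) - (k * f₁ s - k * f₀ s) := by
      funext s; simp only [hG]; ring
    calc (∫ s, G s)
        = ∫ s, ((myCDF f₀ s * f₁ s - myCDF f₀ s * f₀ s) - (k * f₁ s - k * f₀ s)) := by
          rw [hGeq]
      _ = (∫ s, (myCDF f₀ s * f₁ s - myCDF f₀ s * f₀ s)) - ∫ s, (k * f₁ s - k * f₀ s) :=
          integral_sub hA hB
      _ = ((∫ s, myCDF f₀ s * f₁ s) - ∫ s, myCDF f₀ s * f₀ s)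
            - ((∫ s, k * f₁ s) - ∫ s, k * f₀ s) := by
          rw [integral_sub hint1 hint0,
            integral_sub (h₁.integrable.const_mul k) (h₀.integrable.const_mul k)]
      _ = (∫ s, myCDF f₀ s * f₁ s) - ∫ s, myCDF f₀ s * f₀ s := by
          rw [integral_const_mul, integral_const_mul, h₁.2.2, h₀.2.2]; ring
  have hGipos : 0 < ∫ s, G s := by
    rw [integral_pos_iff_support_of_nonneg_ae (Filter.Eventually.of_forall hGnn) hGint]
    have hsub : Set.Ioi c ⊆ Function.support G := fun s hs =>
      (hGpos s (ne_of_gt hs)).ne'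
    calc (0:ENNReal) < ⊤ := by simp
      _ = volume (Set.Ioi c) := (Real.volume_Ioi).symm
      _ ≤ volume (Function.support G) := measure_mono hsub
  linarith [hGval ▸ hGipos]

lemma rate_eq {f g : ℝ → ℝ} (hf : IsFullSupportDensity f) (hg : IsFullSupportDensity g)
    (lam mu : ℝ) :
    (∫ s, (lam * myCDF g s + mu) * f s) = lam * (∫ s, myCDF g s * f s) + mu := by
  have h1 : Integrable (fun s => myCDF g s * f s) := integrable_myCDF_mul hg hf.integrable
  have heq : (fun s => (lam * myCDF g s + mu) * f s)
      = fun s => lam * (myCDF g s * f s) + mu * f s := by funext s; ring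
  rw [heq, integral_add (h1.const_mul lam) (hf.integrable.const_mul mu),
    integral_const_mul, integral_const_mul, hf.2.2, mul_one]

lemma B_nonneg {f₀ : ℝ → ℝ} (h₀ : IsFullSupportDensity f₀) :
    0 ≤ ∫ s, myCDF f₀ s * f₀ s :=
  integral_nonneg fun s => mul_nonneg (myCDF_nonneg h₀ s) (h₀.2.1 s).le

lemma B_le_one {f₀ : ℝ → ℝ} (h₀ : IsFullSupportDensity f₀) :
    (∫ s, myCDF f₀ s * f₀ s) ≤ 1 := by
  have := integral_mono (integrable_myCDF_mul h₀ h₀.integrable) h₀.integrable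
    (fun s => mul_le_of_le_one_left (h₀.2.1 s).le (myCDF_le_one h₀ s))
  rw [h₀.2.2] at this
  exact this

set_option maxHeartbeats 1600000 in
/-- Full characterization: error-rate balance via an informative classifier, equal stakes,
predictive parity (equal equilibrium prevalence) and aligned incentives can be jointly
satisfied if and only if the groups' cost CDFs cross at some nonnegative value. -/
theorem all_four_iff_nonneg_crossing
    (f₁X f₀X f₁Y f₀Y : ℝ → ℝ) (HX HY : ℝ → ℝ)
    (h₁X : IsFullSupportDensity f₁X) (h₀X : IsFullSupportDensity f₀X)
    (h₁Y : IsFullSupportDensity f₁Y) (h₀Y : IsFullSupportDensity f₀Y)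
    (hmX : StrictMLRP f₁X f₀X) (hmY : StrictMLRP f₁Y f₀Y)
    (hHXm : Monotone HX) (hHXc : Continuous HX)
    (hHYm : Monotone HY) (hHYc : Continuous HY) :
    (∃ (δX δY : ℝ → ℝ) (𝒯 ℱ r : ℝ),
      IsClassifier δX ∧ IsClassifier δY ∧
      TPR δX f₁X = 𝒯 ∧ TPR δY f₁Y = 𝒯 ∧
      FPR δX f₀X = ℱ ∧ FPR δY f₀Y = ℱ ∧
      𝒯 > ℱ ∧
      HX (r * (𝒯 - ℱ)) = HY (r * (𝒯 - ℱ)) ∧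
      HX (r * (𝒯 - ℱ)) ≥ HX 0 ∧ HY (r * (𝒯 - ℱ)) ≥ HY 0) ↔
    (∃ cbar : ℝ, 0 ≤ cbar ∧ HX cbar = HY cbar) := by
  constructor
  · rintro ⟨δX, δY, 𝒯, ℱ, r, hδX, hδY, hTX, hTY, hFX, hFY, hTF, heq, haX, haY⟩
    set c : ℝ := r * (𝒯 - ℱ) with hc
    rcases le_or_gt 0 c with hnn | hneg
    · exact ⟨c, hnn, heq⟩
    · have e1 : HX c = HX 0 := le_antisymm (hHXm hneg.le) haX
      have e2 : HY c = HY 0 := le_antisymm (hHYm hneg.le) haY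
      exact ⟨0, le_refl 0, by rw [← e1, ← e2]; exact heq⟩
  · rintro ⟨cbar, hcb, hcross⟩
    set AX : ℝ := ∫ s, myCDF f₀X s * f₁X s with hAX
    set BX : ℝ := ∫ s, myCDF f₀X s * f₀X s with hBX
    set AY : ℝ := ∫ s, myCDF f₀Y s * f₁Y s with hAY
    set BY : ℝ := ∫ s, myCDF f₀Y s * f₀Y s with hBY
    have hdX : 0 < AX - BX := sub_pos.mpr (mlrp_key h₁X h₀X hmX)
    have hdY : 0 < AY - BY := sub_pos.mpr (mlrp_key h₁Y h₀Y hmY)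
    have hBXnn : 0 ≤ BX := B_nonneg h₀X
    have hBXle : BX ≤ 1 := B_le_one h₀X
    have hBYnn : 0 ≤ BY := B_nonneg h₀Y
    have hBYle : BY ≤ 1 := B_le_one h₀Y
    have hTX0 : ∀ lam mu : ℝ, TPR (fun s => lam * myCDF f₀X s + mu) f₁X = lam * AX + mu :=
      fun lam mu => by rw [TPR, rate_eq h₁X h₀X, ← hAX]
    have hTY0 : ∀ lam mu : ℝ, TPR (fun s => lam * myCDF f₀Y s + mu) f₁Y = lam * AY + mu :=
      fun lam mu => by rw [TPR, rate_eq h₁Y h₀Y, ← hAY]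
    have hFX0 : ∀ lam mu : ℝ, FPR (fun s => lam * myCDF f₀X s + mu) f₀X = lam * BX + mu :=
      fun lam mu => by rw [FPR, rate_eq h₀X h₀X, ← hBX]
    have hFY0 : ∀ lam mu : ℝ, FPR (fun s => lam * myCDF f₀Y s + mu) f₀Y = lam * BY + mu :=
      fun lam mu => by rw [FPR, rate_eq h₀Y h₀Y, ← hBY]
    have hmXcdf : ∀ lam mu : ℝ, Measurable (fun s => lam * myCDF f₀X s + mu) :=
      fun lam mu => ((myCDF_measurable h₀X).const_mul lam).add_const mu
    have hmYcdf : ∀ lam mu : ℝ, Measurable (fun s => lam * myCDF f₀Y s + mu) :=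
      fun lam mu => ((myCDF_measurable h₀Y).const_mul lam).add_const mu
    have hcdfX01 : ∀ s, 0 ≤ myCDF f₀X s ∧ myCDF f₀X s ≤ 1 :=
      fun s => ⟨myCDF_nonneg h₀X s, myCDF_le_one h₀X s⟩
    have hcdfY01 : ∀ s, 0 ≤ myCDF f₀Y s ∧ myCDF f₀Y s ≤ 1 :=
      fun s => ⟨myCDF_nonneg h₀Y s, myCDF_le_one h₀Y s⟩
    clear_value AX BX AY BY
    clear hAX hBX hAY hBY
    set m : ℝ := min (AX - BX) (AY - BY) with hm
    have hmpos : 0 < m := lt_min hdX hdY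
    have hmleX : m ≤ AX - BX := min_le_left _ _
    have hmleY : m ≤ AY - BY := min_le_right _ _
    clear_value m
    set lX : ℝ := m / (4 * (AX - BX)) with hlX
    set lY : ℝ := m / (4 * (AY - BY)) with hlY
    have hlXpos : 0 < lX := div_pos hmpos (by linarith)
    have hlYpos : 0 < lY := div_pos hmpos (by linarith)
    have hlXle : lX ≤ 1 / 4 := by
      rw [hlX, div_le_div_iff₀ (by linarith) (by norm_num)]
      nlinarith
    have hlYle : lY ≤ 1 / 4 := by
      rw [hlY, div_le_div_iff₀ (by linarith) (by norm_num)]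
      nlinarith
    have hlXd : lX * (AX - BX) = m / 4 := by
      rw [hlX]; field_simp
    have hlYd : lY * (AY - BY) = m / 4 := by
      rw [hlY]; field_simp
    clear_value lX lY
    have hrc : (cbar / (m / 4)) * ((1 / 2 + m / 4) - 1 / 2) = cbar := by
      field_simp
      ring
    refine ⟨fun s => lX * myCDF f₀X s + (1 / 2 - lX * BX),
      fun s => lY * myCDF f₀Y s + (1 / 2 - lY * BY),
      1 / 2 + m / 4, 1 / 2, cbar / (m / 4), ?_, ?_, ?_, ?_, ?_, ?_, ?_, ?_, ?_, ?_⟩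
    · refine ⟨hmXcdf _ _, fun s => ?_⟩
      obtain ⟨hs0, hs1⟩ := hcdfX01 s
      constructor
      · have h1 : 0 ≤ lX * myCDF f₀X s := mul_nonneg hlXpos.le hs0
        have h2 : lX * BX ≤ 1 / 4 := by nlinarith
        simp only [Set.mem_Icc]
        linarith
      · have h1 : lX * myCDF f₀X s ≤ lX := by nlinarith
        have h2 : 0 ≤ lX * BX := mul_nonneg hlXpos.le hBXnn
        linarith
    · refine ⟨hmYcdf _ _, fun s => ?_⟩
      obtain ⟨hs0, hs1⟩ := hcdfY01 s
      constructor
      · have h1 : 0 ≤ lY * myCDF f₀Y s := mul_nonneg hlYpos.le hs0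
        have h2 : lY * BY ≤ 1 / 4 := by nlinarith
        simp only [Set.mem_Icc]
        linarith
      · have h1 : lY * myCDF f₀Y s ≤ lY := by nlinarith
        have h2 : 0 ≤ lY * BY := mul_nonneg hlYpos.le hBYnn
        linarith
    · rw [hTX0]; nlinarith [hlXd]
    · rw [hTY0]; nlinarith [hlYd]
    · rw [hFX0]; ring
    · rw [hFY0]; ring
    · linarith
    · rw [hrc]; exact hcross
    · rw [hrc]; exact hHXm hcb
    · rw [hrc]; exact hHYm hcb
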